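/- Let X_1,...,X_d be disjoint finite sets and a_1,...,a_d, b_1,...,b_d nonnegative integers. Suppose A_1,...,A_h and B_1,...,B_h are families of subsets of X_1 ∪ ... ∪ X_d such that: (1) A_i ∩ B_i = ∅ for all i; (2) A_i ∩ B_j ≠ ∅ for all i < j; (3) |B_i ∩ X_j| ≤ b_j for all i, j; (4) for each i there is a permutation π of [d] with |A_i ∩ X_j| ≤ a_{π(j)} for all j. Then h ≤ Q(a_1,...,a_d,b_1,...,b_d). -/

import Mathlib

/-- `Q(a_1,…,a_d,b_1,…,b_d)`: with `a = max_i a_i` and disjoint sets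
`U_i = {i} × [a+b_i]`, the number of sets `S ⊆ U_1 ∪ … ∪ U_d` for which
there is a permutation `π` of `[d]` such that `S ∩ U_i` is a subset of
`[a_{π(i)} + b_i]` of size `b_i`, for every `i`. -/
def QQ (d : ℕ) (a b : Fin d → ℕ) : ℕ :=
  (((Finset.univ : Finset (Fin d)).biUnion fun i =>
      (Finset.Icc 1 (Finset.univ.sup a + b i)).image fun x => (i, x)).powerset.filter
    fun S => ∃ π : Equiv.Perm (Fin d), ∀ i,
      ((S.filter fun u => u.1 = i).image Prod.snd ⊆ Finset.Icc 1 (a (π i) + b i)) ∧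
      (S.filter fun u => u.1 = i).card = b i).card


namespace TwoFamAux
open Finset
noncomputable section

def momentRow {m : ℕ} (q : ℚ) : Fin m → ℚ := fun t => q ^ (t : ℕ)
def indRow {m : ℕ} (p : ℕ) : Fin m → ℚ := fun t => if (t : ℕ) = p then 1 else 0
abbrev Cols (n k : ℕ) : Type := {σ : Finset (Fin n) // σ.card = k}
def Cols.enum {n k : ℕ} (σ : Cols n k) (c : Fin k) : Fin n := (σ.1.orderIsoOfFin σ.2 c : Fin n)
lemma Cols.enum_mem {n k} (σ : Cols n k) (c) : σ.enum c ∈ σ.1 := (σ.1.orderIsoOfFin σ.2 c).2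
lemma Cols.enum_injective {n k} (σ : Cols n k) : Function.Injective σ.enum := fun c c' h =>
  (σ.1.orderIsoOfFin σ.2).injective (Subtype.ext h)
lemma Cols.exists_enum {n k} (σ : Cols n k) {x} (hx : x ∈ σ.1) : ∃ c, σ.enum c = x :=
  ⟨(σ.1.orderIsoOfFin σ.2).symm ⟨x, hx⟩, by simp [Cols.enum]⟩
lemma Cols.image_enum {n k} (σ : Cols n k) : Finset.univ.image σ.enum = σ.1 := by
  ext x
  simp only [mem_image, mem_univ, true_and]
  exact ⟨fun ⟨c, hc⟩ => hc ▸ σ.enum_mem c, fun hx => σ.exists_enum hx⟩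
variable (sa bb : ℕ)
def detR (R : Fin sa ⊕ Fin bb → Fin (sa + bb) → ℚ) : ℚ :=
  Matrix.det (Matrix.of fun u c : Fin sa ⊕ Fin bb => R u (finSumFinEquiv c))
lemma detR_eq_zero {R : Fin sa ⊕ Fin bb → Fin (sa + bb) → ℚ} {u v : Fin sa ⊕ Fin bb}
    (huv : u ≠ v) (hR : R u = R v) : detR sa bb R = 0 :=
  Matrix.det_zero_of_row_eq huv (by funext c; simp [hR])
def Xval (Ar : Fin sa → Fin (sa + bb) → ℚ) (σ : Cols (sa + bb) bb) : ℚ :=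
  detR sa bb (Sum.elim Ar fun c => indRow ((σ.enum c : ℕ)))
def Yval (Br : Fin bb → Fin (sa + bb) → ℚ) (σ : Cols (sa + bb) bb) : ℚ :=
  ∑ π : Equiv.Perm (Fin bb), ((Equiv.Perm.sign π : ℤ) : ℚ) * ∏ c, Br c (σ.enum (π c))


lemma detR_expansion (Ar : Fin sa → Fin (sa + bb) → ℚ) (Br : Fin bb → Fin (sa + bb) → ℚ) :
    detR sa bb (Sum.elim Ar Br)
      = ∑ σ : Cols (sa + bb) bb, Xval sa bb Ar σ * Yval sa bb Br σ := by
  classical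
  rcases Nat.eq_zero_or_pos bb with hbb | hbb
  · -- bb = 0 : single column set, everything trivial
    subst hbb
    have huniq : ∀ σ : Cols (sa + 0) 0, σ = ⟨∅, rfl⟩ := by
      rintro ⟨σ, hσ⟩
      exact Subtype.ext (Finset.card_eq_zero.1 hσ)
    have hsum : (∑ σ : Cols (sa + 0) 0, Xval sa 0 Ar σ * Yval sa 0 Br σ)
        = Xval sa 0 Ar ⟨∅, rfl⟩ * Yval sa 0 Br ⟨∅, rfl⟩ :=
      Fintype.sum_eq_single _ (fun σ hσ => absurd (huniq σ) hσ)
    rw [hsum]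
    have hR : (Sum.elim Ar Br : Fin sa ⊕ Fin 0 → Fin (sa + 0) → ℚ)
        = Sum.elim Ar (fun c => indRow ((Cols.enum (⟨∅, rfl⟩ : Cols (sa + 0) 0) c : ℕ))) := by
      funext u
      rcases u with r | c
      · rfl
      · exact c.elim0
    have hY : Yval sa 0 Br ⟨∅, rfl⟩ = 1 := by
      rw [Yval]
      rw [Fintype.sum_eq_single (1 : Equiv.Perm (Fin 0))
        (fun π hπ => absurd (Subsingleton.elim π 1) hπ)]
      simp
    rw [hY, mul_one, Xval, hR]
  · -- main case
    have hm : 0 < sa + bb := by omega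
    set z0 : Fin (sa + bb) := ⟨0, hm⟩ with hz0
    -- notation
    let e := (finSumFinEquiv : Fin sa ⊕ Fin bb ≃ Fin (sa + bb))
    let base : Fin (sa + bb) → (Fin sa ⊕ Fin bb) → ℚ :=
      fun t => fun cc => if e cc = t then (1 : ℚ) else 0
    let D : (Fin bb → Fin (sa + bb)) → ℚ :=
      fun t => detR sa bb (Sum.elim Ar fun c => indRow ((t c : ℕ)))
    have hDalt : ∀ t : Fin bb → Fin (sa + bb),
        D t = Matrix.detRowAlternating
          (Matrix.of (Sum.elim (fun (r : Fin sa) (cc : Fin sa ⊕ Fin bb) => Ar r (e cc))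
            (fun c => base (t c)))) := by
      intro t
      show Matrix.det _ = Matrix.det _
      congr 1
      ext u cc
      rcases u with r | c
      · rfl
      · show indRow ((t c : ℕ)) (e cc) = base (t c) cc
        show (if ((e cc : Fin (sa + bb)) : ℕ) = ((t c : Fin (sa+bb)) : ℕ) then (1:ℚ) else 0)
          = if e cc = t c then 1 else 0
        by_cases hcc : e cc = t c
        · rw [if_pos (by rw [hcc]), if_pos hcc]
        · rw [if_neg (fun hc => hcc (Fin.ext hc)), if_neg hcc]
    -- step 1 : multilinear expansion over the B-rows
    have step1 : detR sa bb (Sum.elim Ar Br)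
        = ∑ t : Fin bb → Fin (sa + bb), (∏ c, Br c (t c)) • D t := by
      have hrows : (Matrix.of (fun (u : Fin sa ⊕ Fin bb) (cc : Fin sa ⊕ Fin bb) =>
            Sum.elim Ar Br u (e cc)))
          = fun u => ∑ tt ∈ (Sum.elim (fun _ => ({z0} : Finset (Fin (sa + bb))))
              (fun _ => univ) u),
              Sum.elim (fun (r : Fin sa) (_ : Fin (sa + bb)) (cc : Fin sa ⊕ Fin bb) => Ar r (e cc))
                (fun (c : Fin bb) (tt : Fin (sa + bb)) => Br c tt • base tt) u tt := by
        funext u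
        rcases u with r | c
        · simp only [Sum.elim_inl]
          rw [Finset.sum_singleton]
          rfl
        · funext cc
          simp only [Sum.elim_inr, Matrix.of_apply]
          rw [Finset.sum_apply]
          have : ∀ tt : Fin (sa + bb), (Br c tt • base tt) cc
              = if e cc = tt then Br c tt else 0 := by
            intro tt
            simp only [Pi.smul_apply, smul_eq_mul, base]
            by_cases h : e cc = tt
            · rw [if_pos h, if_pos h, mul_one]
            · rw [if_neg h, if_neg h, mul_zero]
          rw [Finset.sum_congr rfl (fun tt _ => this tt)]
          rw [Finset.sum_ite_eq]
          simp
      have expand := MultilinearMap.map_sum_finset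
        (Matrix.detRowAlternating : ((Fin sa ⊕ Fin bb) → ℚ) [⋀^(Fin sa ⊕ Fin bb)]→ₗ[ℚ] ℚ).toMultilinearMap
        (fun (u : Fin sa ⊕ Fin bb) (tt : Fin (sa + bb)) =>
          Sum.elim (fun (r : Fin sa) (_ : Fin (sa + bb)) (cc : Fin sa ⊕ Fin bb) => Ar r (e cc))
            (fun (c : Fin bb) (tt : Fin (sa + bb)) => Br c tt • base tt) u tt)
        (Sum.elim (fun _ => ({z0} : Finset (Fin (sa + bb)))) (fun _ => univ))
      have lhs_eq : detR sa bb (Sum.elim Ar Br)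
          = Matrix.detRowAlternating (Matrix.of (fun (u : Fin sa ⊕ Fin bb) (cc : Fin sa ⊕ Fin bb) =>
              Sum.elim Ar Br u (e cc))) := rfl
      rw [lhs_eq, hrows]
      rw [show (Matrix.detRowAlternating (fun u => ∑ tt ∈ (Sum.elim (fun _ => ({z0} : Finset (Fin (sa + bb))))
              (fun _ => univ) u), Sum.elim (fun (r : Fin sa) (_ : Fin (sa + bb)) (cc : Fin sa ⊕ Fin bb) => Ar r (e cc))
                (fun (c : Fin bb) (tt : Fin (sa + bb)) => Br c tt • base tt) u tt))
          = _ from expand]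
      -- now reindex the pi-sum by t := p ∘ Sum.inr
      refine Finset.sum_bij' (i := fun p _ => p ∘ Sum.inr) (j := fun t _ => Sum.elim (fun _ => z0) t)
        ?_ ?_ ?_ ?_ ?_
      · intro p hp
        simp
      · intro t ht
        rw [Fintype.mem_piFinset]
        rintro (r | c) <;> simp
      · intro p hp
        rw [Fintype.mem_piFinset] at hp
        funext u
        rcases u with r | c
        · have := hp (Sum.inl r)
          simp only [Sum.elim_inl, Finset.mem_singleton] at this
          simp [this]
        · simp
      · intro t ht
        rfl
      · intro p hp
        -- pull out scalars
        have hfun : (fun u => Sum.elim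
              (fun (r : Fin sa) (_ : Fin (sa + bb)) (cc : Fin sa ⊕ Fin bb) => Ar r (e cc))
              (fun (c : Fin bb) (tt : Fin (sa + bb)) => Br c tt • base tt) u (p u))
            = fun u => (Sum.elim (fun _ => (1:ℚ)) (fun c => Br c (p (Sum.inr c))) u) •
                (Sum.elim (fun (r : Fin sa) (cc : Fin sa ⊕ Fin bb) => Ar r (e cc))
                  (fun c => base (p (Sum.inr c))) u) := by
          funext u
          rcases u with r | c
          · simp
          · simp
        have hsmul := MultilinearMap.map_smul_univ
          (Matrix.detRowAlternating : ((Fin sa ⊕ Fin bb) → ℚ) [⋀^(Fin sa ⊕ Fin bb)]→ₗ[ℚ] ℚ).toMultilinearMap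
          (Sum.elim (fun _ => (1:ℚ)) (fun c => Br c (p (Sum.inr c))))
          (Sum.elim (fun (r : Fin sa) (cc : Fin sa ⊕ Fin bb) => Ar r (e cc))
            (fun c => base (p (Sum.inr c))))
        rw [hfun, hsmul]
        rw [Fintype.prod_sum_type]
        simp only [Sum.elim_inl, Sum.elim_inr, Finset.prod_const_one, one_mul]
        rw [hDalt]
        rfl
    rw [step1]
    -- permutation behaviour of D
    have hDperm : ∀ (σ : Cols (sa + bb) bb) (π : Equiv.Perm (Fin bb)),
        D (σ.enum ∘ π) = ((Equiv.Perm.sign π : ℤ) : ℚ) * D σ.enum := by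
      intro σ π
      have hmat : (Matrix.of fun (u cc : Fin sa ⊕ Fin bb) =>
            Sum.elim Ar (fun c => indRow (((σ.enum ∘ π) c : ℕ))) u (e cc))
          = (Matrix.of fun (u cc : Fin sa ⊕ Fin bb) =>
            Sum.elim Ar (fun c => indRow ((σ.enum c : ℕ))) u (e cc)).submatrix
              (Equiv.sumCongr (Equiv.refl (Fin sa)) π) id := by
        ext u cc
        rcases u with r | c
        · rfl
        · rfl
      show Matrix.det _ = _ * Matrix.det _
      rw [hmat, Matrix.det_permute]
      congr 2
      rw [Equiv.Perm.sign_sumCongr]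
      simp
    -- kill non-injective terms
    have hinj_zero : ∀ t ∈ (univ : Finset (Fin bb → Fin (sa + bb))),
        ((∏ c, Br c (t c)) • D t ≠ 0) → Function.Injective t := by
      intro t _ hne
      by_contra hni
      apply hne
      rw [Function.not_injective_iff] at hni
      obtain ⟨c1, c2, hteq, hcne⟩ := hni
      have hd : D t = 0 := detR_eq_zero sa bb (u := Sum.inr c1) (v := Sum.inr c2)
        (by simp [hcne]) (by simp [hteq])
      rw [hd, smul_zero]
    rw [← Finset.sum_filter_of_ne hinj_zero]
    -- group by image
    have himg : ∀ t ∈ univ.filter (fun t : Fin bb → Fin (sa + bb) => Function.Injective t),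
        (univ.image t) ∈ univ.filter (fun σ : Finset (Fin (sa + bb)) => σ.card = bb) := by
      intro t ht
      simp only [mem_filter, mem_univ, true_and] at ht ⊢
      rw [Finset.card_image_of_injective _ ht, Finset.card_univ, Fintype.card_fin]
    rw [← Finset.sum_fiberwise_of_maps_to himg (fun t => (∏ c, Br c (t c)) • D t)]
    rw [Finset.sum_subtype (p := fun σ : Finset (Fin (sa + bb)) => σ.card = bb)
      (univ.filter (fun σ : Finset (Fin (sa + bb)) => σ.card = bb))
      (by intro x; simp) (fun σ' => ∑ t ∈ (univ.filter
          (fun t : Fin bb → Fin (sa + bb) => Function.Injective t)).filter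
          (fun t => univ.image t = σ'), (∏ c, Br c (t c)) • D t)]
    refine Finset.sum_congr rfl ?_
    intro σ _
    -- the fiber over σ
    have hmemfib : ∀ t, t ∈ (univ.filter
        (fun t : Fin bb → Fin (sa + bb) => Function.Injective t)).filter
        (fun t => univ.image t = (σ : Finset (Fin (sa + bb)))) ↔
        (Function.Injective t ∧ univ.image t = σ.1) := by
      intro t
      simp only [mem_filter, mem_univ, true_and]
    have hfiber : ∑ t ∈ (univ.filter
          (fun t : Fin bb → Fin (sa + bb) => Function.Injective t)).filter
          (fun t => univ.image t = (σ : Finset (Fin (sa + bb)))),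
          (∏ c, Br c (t c)) • D t
        = ∑ π : Equiv.Perm (Fin bb), (∏ c, Br c (Cols.enum σ (π c))) • D (Cols.enum σ ∘ π) := by
      refine Finset.sum_bij'
        (i := fun t ht => Equiv.ofBijective
          (fun c => (σ.1.orderIsoOfFin σ.2).symm ⟨t c, by
            have h2 := ((hmemfib t).1 ht).2
            rw [← h2]
            exact Finset.mem_image_of_mem t (mem_univ c)⟩)
          (Finite.injective_iff_bijective.1 (fun c c' hcc => ((hmemfib t).1 ht).1
            (by simpa using congrArg (fun w => ((σ.1.orderIsoOfFin σ.2) w : Fin (sa + bb))) hcc))))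
        (j := fun π _ => Cols.enum σ ∘ π) ?_ ?_ ?_ ?_ ?_
      · intro t ht
        exact mem_univ _
      · intro π _
        rw [hmemfib]
        constructor
        · exact (Cols.enum_injective σ).comp π.injective
        · show univ.image (Cols.enum σ ∘ π) = σ.1
          rw [← Finset.image_image, Finset.image_univ_equiv π, Cols.image_enum]
      · intro t ht
        funext c
        simp [Cols.enum]
      · intro π _
        apply Equiv.ext
        intro c
        rw [Equiv.ofBijective_apply, OrderIso.symm_apply_eq]
        exact Subtype.ext rfl
      · intro t ht
        have hgen : ∀ (π : Equiv.Perm (Fin bb)), (∀ c, Cols.enum σ (π c) = t c) →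
            (∏ c, Br c (t c)) • D t
              = (∏ c, Br c (Cols.enum σ (π c))) • D (Cols.enum σ ∘ π) := by
          intro π hc
          rw [show Cols.enum σ ∘ ⇑π = t from funext hc]
          simp only [hc]
        exact hgen _ (fun c => by simp [Cols.enum])
    rw [hfiber]
    -- algebra
    have hXD : D (Cols.enum σ) = Xval sa bb Ar σ := rfl
    calc ∑ π : Equiv.Perm (Fin bb), (∏ c, Br c (Cols.enum σ (π c))) • D (Cols.enum σ ∘ π)
        = ∑ π : Equiv.Perm (Fin bb),
            (((Equiv.Perm.sign π : ℤ) : ℚ) * ∏ c, Br c (Cols.enum σ (π c))) * Xval sa bb Ar σ := by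
          refine Finset.sum_congr rfl ?_
          intro π _
          rw [hDperm σ π, hXD, smul_eq_mul]
          ring
      _ = (∑ π : Equiv.Perm (Fin bb),
            ((Equiv.Perm.sign π : ℤ) : ℚ) * ∏ c, Br c (Cols.enum σ (π c))) * Xval sa bb Ar σ := by
          rw [Finset.sum_mul]
      _ = Xval sa bb Ar σ * Yval sa bb Br σ := by
          rw [Yval, mul_comm]

lemma Xval_eq_zero (Ar : Fin sa → Fin (sa + bb) → ℚ) (a' : ℕ)
    (hAr : ∀ r : Fin sa, a' ≤ (r : ℕ) → Ar r = indRow ((r : ℕ) + bb))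
    (σ : Cols (sa + bb) bb) (t0 : Fin (sa + bb)) (ht0 : t0 ∈ σ.1)
    (hbig : a' + bb ≤ (t0 : ℕ)) : Xval sa bb Ar σ = 0 := by
  obtain ⟨c, hc⟩ := σ.exists_enum ht0
  have ht0m : (t0 : ℕ) < sa + bb := t0.2
  have hr : (t0 : ℕ) - bb < sa := by omega
  refine detR_eq_zero sa bb (u := Sum.inl ⟨(t0 : ℕ) - bb, hr⟩) (v := Sum.inr c) (by simp) ?_
  simp only [Sum.elim_inl, Sum.elim_inr]
  rw [hAr _ (by simp; omega), hc]
  have heq : (t0 : ℕ) - bb + bb = (t0 : ℕ) := by omega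
  rw [heq]

variable (a' : ℕ) (ha' : a' ≤ sa)

def rowFun (x : Fin (a' + bb) ⊕ Fin (sa - a')) : Fin sa ⊕ Fin bb :=
  match x with
  | .inl z => if h : (z : ℕ) < a' then .inl ⟨z, by omega⟩
      else .inr ⟨(z : ℕ) - a', by have := z.2; omega⟩
  | .inr y => .inl ⟨a' + (y : ℕ), by have := y.2; omega⟩

def keyFn : Fin sa ⊕ Fin bb → ℕ := Sum.elim (fun r => (r : ℕ)) (fun c => sa + (c : ℕ))

lemma keyFn_rowFun (x : Fin (a' + bb) ⊕ Fin (sa - a')) :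
    keyFn sa bb (rowFun sa bb a' ha' x)
      = Sum.elim (fun z : Fin (a' + bb) => if (z : ℕ) < a' then (z : ℕ) else sa + ((z : ℕ) - a'))
          (fun y : Fin (sa - a') => a' + (y : ℕ)) x := by
  rcases x with z | y
  · by_cases h : (z : ℕ) < a'
    · simp [rowFun, dif_pos h, keyFn, if_pos h]
    · simp [rowFun, dif_neg h, keyFn, if_neg h]
  · simp [rowFun, keyFn]

lemma rowFun_injective : Function.Injective (rowFun sa bb a' ha') := by
  intro x y h
  have e := congrArg (keyFn sa bb) h
  rw [keyFn_rowFun, keyFn_rowFun] at e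
  rcases x with z1 | y1 <;> rcases y with z2 | y2 <;>
    simp only [Sum.elim_inl, Sum.elim_inr] at e
  · exact congrArg Sum.inl (Fin.ext (by have := z1.2; have := z2.2; split_ifs at e <;> omega))
  · exfalso; have := z1.2; have := y2.2; split_ifs at e <;> omega
  · exfalso; have := z2.2; have := y1.2; split_ifs at e <;> omega
  · exact congrArg Sum.inr (Fin.ext (by omega))

def rowEquiv : (Fin (a' + bb) ⊕ Fin (sa - a')) ≃ (Fin sa ⊕ Fin bb) :=
  Equiv.ofBijective (rowFun sa bb a' ha')
    ((Fintype.bijective_iff_injective_and_card _).2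
      ⟨rowFun_injective sa bb a' ha', by simp; omega⟩)

lemma rowEquiv_apply (x) : rowEquiv sa bb a' ha' x = rowFun sa bb a' ha' x := rfl

def colFun (x : Fin (a' + bb) ⊕ Fin (sa - a')) : Fin (sa + bb) :=
  match x with
  | .inl z => ⟨z, by have := z.2; omega⟩
  | .inr y => ⟨a' + bb + (y : ℕ), by have := y.2; omega⟩

lemma colFun_injective : Function.Injective (colFun sa bb a' ha') := by
  intro x y h
  have e := congrArg Fin.val h
  rcases x with z1 | y1 <;> rcases y with z2 | y2 <;>
    simp only [colFun] at e
  · exact congrArg Sum.inl (Fin.ext e)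
  · exfalso; have := z1.2; have := y2.2; omega
  · exfalso; have := z2.2; have := y1.2; omega
  · exact congrArg Sum.inr (Fin.ext (by omega))

def colEquiv : (Fin (a' + bb) ⊕ Fin (sa - a')) ≃ (Fin sa ⊕ Fin bb) :=
  Equiv.ofBijective (fun x => finSumFinEquiv.symm (colFun sa bb a' ha' x))
    ((Fintype.bijective_iff_injective_and_card _).2
      ⟨fun x y h => colFun_injective sa bb a' ha' (finSumFinEquiv.symm.injective h),
       by simp; omega⟩)

lemma colEquiv_apply (x) : finSumFinEquiv (colEquiv sa bb a' ha' x) = colFun sa bb a' ha' x := by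
  simp [colEquiv, Equiv.ofBijective]

include ha' in
lemma detR_diag_ne_zero (q : Fin sa ⊕ Fin bb → ℚ)
    (hq : ∀ u v : Fin sa ⊕ Fin bb,
      (∀ r, u = Sum.inl r → (r : ℕ) < a') → (∀ r, v = Sum.inl r → (r : ℕ) < a') →
      q u = q v → u = v)
    (Ar : Fin sa → Fin (sa + bb) → ℚ)
    (hAr : ∀ r : Fin sa, Ar r = if (r : ℕ) < a' then momentRow (q (.inl r)) else indRow ((r : ℕ) + bb))
    (Br : Fin bb → Fin (sa + bb) → ℚ) (hBr : ∀ c, Br c = momentRow (q (.inr c))) :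
    detR sa bb (Sum.elim Ar Br) ≠ 0 := by
  classical
  set N : Matrix (Fin sa ⊕ Fin bb) (Fin sa ⊕ Fin bb) ℚ :=
    Matrix.of (fun u c => Sum.elim Ar Br u (finSumFinEquiv c)) with hN
  have hdet : detR sa bb (Sum.elim Ar Br) = N.det := rfl
  set f := rowEquiv sa bb a' ha' with hf
  set gc := colEquiv sa bb a' ha' with hgcdef
  set ρ : Equiv.Perm (Fin (a' + bb) ⊕ Fin (sa - a')) := f.trans gc.symm with hρ
  have key : N.submatrix f gc = ((N.submatrix gc gc).submatrix ρ id) := by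
    ext x y
    simp [Matrix.submatrix_apply, hρ]
  have h1 : ((N.submatrix gc gc).submatrix ρ id).det
      = ((Equiv.Perm.sign ρ : ℤ) : ℚ) * (N.submatrix gc gc).det :=
    Matrix.det_permute ρ _
  have h2 : (N.submatrix gc gc).det = N.det := Matrix.det_submatrix_equiv_self gc N
  set pvec : Fin (a' + bb) → ℚ := fun z => q (rowFun sa bb a' ha' (.inl z)) with hpvec
  set W : Matrix (Fin (a' + bb)) (Fin (sa - a')) ℚ :=
    Matrix.of (fun z y => pvec z ^ (a' + bb + (y : ℕ))) with hW
  have hentry : ∀ x y, (N.submatrix f gc) x y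
      = Sum.elim Ar Br (rowFun sa bb a' ha' x) (colFun sa bb a' ha' y) := by
    intro x y
    simp only [Matrix.submatrix_apply, hN, Matrix.of_apply, hgcdef, colEquiv_apply, hf,
      rowEquiv_apply]
  have hblock : N.submatrix f gc = Matrix.fromBlocks (Matrix.vandermonde pvec) W 0 1 := by
    ext x y
    rw [hentry]
    rcases x with z | y1 <;> rcases y with z' | y2
    · rw [Matrix.fromBlocks_apply₁₁, Matrix.vandermonde_apply]
      simp only [hpvec, rowFun, colFun]
      by_cases hz : (z : ℕ) < a'
      · simp [dif_pos hz, hAr, if_pos hz, momentRow]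
      · simp [dif_neg hz, hBr, momentRow]
    · rw [Matrix.fromBlocks_apply₁₂]
      simp only [hW, Matrix.of_apply, hpvec, rowFun, colFun]
      by_cases hz : (z : ℕ) < a'
      · simp [dif_pos hz, hAr, if_pos hz, momentRow]
      · simp [dif_neg hz, hBr, momentRow]
    · rw [Matrix.fromBlocks_apply₂₁]
      simp only [rowFun, colFun, Sum.elim_inl, hAr, Matrix.zero_apply]
      rw [if_neg (by omega)]
      simp only [indRow]
      rw [if_neg (by have := z'.2; simp; omega)]
    · rw [Matrix.fromBlocks_apply₂₂, Matrix.one_apply]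
      simp only [rowFun, colFun, Sum.elim_inl, hAr]
      rw [if_neg (by omega)]
      simp only [indRow]
      by_cases hy : y1 = y2
      · subst hy
        rw [if_pos (by omega), if_pos rfl]
      · have hvne : (y1 : ℕ) ≠ (y2 : ℕ) := fun hc => hy (Fin.ext hc)
        rw [if_neg (by omega), if_neg hy]
  have hvdm : (Matrix.vandermonde pvec).det ≠ 0 := by
    rw [Matrix.det_vandermonde]
    apply Finset.prod_ne_zero_iff.2
    intro i _
    apply Finset.prod_ne_zero_iff.2
    intro j hj
    have hij : i ≠ j := fun hc => by subst hc; simp at hj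
    have hne : pvec i ≠ pvec j := by
      intro hc
      apply hij
      have hcond : ∀ (w : Fin (a' + bb)) (r : Fin sa),
          rowFun sa bb a' ha' (.inl w) = Sum.inl r → (r : ℕ) < a' := by
        intro w r hr
        simp only [rowFun] at hr
        split_ifs at hr with h
        case pos =>
          have h2 := Sum.inl.inj hr
          rw [← h2]
          simpa using h
        all_goals exact absurd hr (by simp)
      have := hq _ _ (hcond i) (hcond j) hc
      exact Sum.inl.inj (rowFun_injective sa bb a' ha' this)
    intro hc
    exact hne (by linarith [sub_eq_zero.1 hc])
  have hfin : ((Equiv.Perm.sign ρ : ℤ) : ℚ) * N.det ≠ 0 := by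
    rw [← h2, ← h1, ← key, hblock, Matrix.det_fromBlocks_zero₂₁]
    simp [hvdm]
  intro hc
  rw [hdet] at hc
  rw [hc, mul_zero] at hfin
  exact hfin rfl

section Assembly
variable {α : Type*} [DecidableEq α]

def elemN (Xj : Finset α) (x : α) : ℕ := Xj.toList.idxOf x

lemma elemN_lt {Xj : Finset α} {x : α} (hx : x ∈ Xj) : elemN Xj x < Xj.card := by
  rw [elemN, ← Finset.length_toList]
  exact List.idxOf_lt_length_iff.2 (Finset.mem_toList.2 hx)

lemma elemN_inj {Xj : Finset α} {x y : α} (hx : x ∈ Xj) (hy : y ∈ Xj)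
    (h : elemN Xj x = elemN Xj y) : x = y :=
  (List.idxOf_inj (Finset.mem_toList.2 hx)).1 h

def qA (Xj S : Finset α) (bj : ℕ) (r : ℕ) : ℚ :=
  if hr : r < S.toList.length then ((elemN Xj (S.toList[r]'hr) : ℕ) : ℚ)
  else ((Xj.card + bj + r : ℕ) : ℚ)

def qB (Xj S : Finset α) (c : ℕ) : ℚ :=
  if hc : c < S.toList.length then ((elemN Xj (S.toList[c]'hc) : ℕ) : ℚ)
  else ((Xj.card + c : ℕ) : ℚ)

def ArowF (sa bj a' : ℕ) (Xj S : Finset α) : Fin sa → Fin (sa + bj) → ℚ :=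
  fun r => if (r : ℕ) < a' then momentRow (qA Xj S bj (r : ℕ)) else indRow ((r : ℕ) + bj)

def BrowF (sa bj : ℕ) (Xj S : Finset α) : Fin bj → Fin (sa + bj) → ℚ :=
  fun c => momentRow (qB Xj S (c : ℕ))

lemma Arow_vanish (sa bj a' : ℕ) (Xj S : Finset α) :
    ∀ r : Fin sa, a' ≤ (r : ℕ) → ArowF sa bj a' Xj S r = indRow ((r : ℕ) + bj) :=
  fun r hr => if_neg (not_lt.2 hr)

lemma offdiag_zero (sa bj a' : ℕ) (ha' : a' ≤ sa) (Xj SA SB : Finset α) (x : α)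
    (hxA : x ∈ SA) (hxB : x ∈ SB)
    (hcA : SA.card ≤ a') (hcB : SB.card ≤ bj) :
    detR sa bj (Sum.elim (ArowF sa bj a' Xj SA) (BrowF sa bj Xj SB)) = 0 := by
  have hra : SA.toList.idxOf x < SA.toList.length :=
    List.idxOf_lt_length_iff.2 (Finset.mem_toList.2 hxA)
  have hrb : SB.toList.idxOf x < SB.toList.length :=
    List.idxOf_lt_length_iff.2 (Finset.mem_toList.2 hxB)
  have hlenA : SA.toList.length = SA.card := Finset.length_toList SA
  have hlenB : SB.toList.length = SB.card := Finset.length_toList SB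
  have hralt : SA.toList.idxOf x < sa := by omega
  have hrblt : SB.toList.idxOf x < bj := by omega
  refine detR_eq_zero sa bj (u := Sum.inl ⟨SA.toList.idxOf x, hralt⟩)
    (v := Sum.inr ⟨SB.toList.idxOf x, hrblt⟩) (by simp) ?_
  simp only [Sum.elim_inl, Sum.elim_inr, ArowF, BrowF]
  rw [if_pos (by omega)]
  rw [qA, qB, dif_pos hra, dif_pos hrb]
  rw [List.getElem_idxOf hra, List.getElem_idxOf hrb]

lemma diag_ne_zero (sa bj a' : ℕ) (ha' : a' ≤ sa) (Xj SA SB : Finset α)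
    (hSA : SA ⊆ Xj) (hSB : SB ⊆ Xj) (hdisj : ∀ x, x ∈ SA → x ∈ SB → False)
    (hcA : SA.card ≤ a') (hcB : SB.card ≤ bj) :
    detR sa bj (Sum.elim (ArowF sa bj a' Xj SA) (BrowF sa bj Xj SB)) ≠ 0 := by
  have hlenA : SA.toList.length = SA.card := Finset.length_toList SA
  have hlenB : SB.toList.length = SB.card := Finset.length_toList SB
  have hmemA : ∀ (n : ℕ) (hn : n < SA.toList.length), SA.toList[n]'hn ∈ SA :=
    fun n hn => Finset.mem_toList.1 (List.getElem_mem _)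
  have hmemB : ∀ (n : ℕ) (hn : n < SB.toList.length), SB.toList[n]'hn ∈ SB :=
    fun n hn => Finset.mem_toList.1 (List.getElem_mem _)
  refine detR_diag_ne_zero sa bj a' ha'
    (Sum.elim (fun r : Fin sa => qA Xj SA bj (r : ℕ)) (fun c : Fin bj => qB Xj SB (c : ℕ)))
    ?_ _ (fun r => rfl) _ (fun c => rfl)
  intro u v hu hv heq
  rcases u with r | c <;> rcases v with r' | c'
  · -- A vs A
    have hr : (r : ℕ) < a' := hu r rfl
    have hr' : (r' : ℕ) < a' := hv r' rfl
    simp only [Sum.elim_inl, qA] at heq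
    split_ifs at heq with h1 h2 h2
    · have hx := hmemA _ h1
      have hy := hmemA _ h2
      have hidx : elemN Xj (SA.toList[(r : ℕ)]'h1) = elemN Xj (SA.toList[(r' : ℕ)]'h2) := by
        exact_mod_cast heq
      have hxy := elemN_inj (hSA hx) (hSA hy) hidx
      have : (r : ℕ) = (r' : ℕ) := ((SA.nodup_toList).getElem_inj_iff).1 hxy
      exact congrArg Sum.inl (Fin.ext this)
    · exfalso
      have hlt := elemN_lt (hSA (hmemA _ h1))
      have : elemN Xj (SA.toList[(r : ℕ)]'h1) = Xj.card + bj + (r' : ℕ) := by exact_mod_cast heq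
      omega
    · exfalso
      have hlt := elemN_lt (hSA (hmemA _ h2))
      have : Xj.card + bj + (r : ℕ) = elemN Xj (SA.toList[(r' : ℕ)]'h2) := by exact_mod_cast heq
      omega
    · have : Xj.card + bj + (r : ℕ) = Xj.card + bj + (r' : ℕ) := by exact_mod_cast heq
      exact congrArg Sum.inl (Fin.ext (by omega))
  · -- A vs B
    exfalso
    have hr : (r : ℕ) < a' := hu r rfl
    have hc' : (c' : ℕ) < bj := c'.2
    simp only [Sum.elim_inl, Sum.elim_inr, qA, qB] at heq
    split_ifs at heq with h1 h2 h2
    · have hx := hmemA _ h1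
      have hy := hmemB _ h2
      have hidx : elemN Xj (SA.toList[(r : ℕ)]'h1) = elemN Xj (SB.toList[(c' : ℕ)]'h2) := by
        exact_mod_cast heq
      exact hdisj _ hx (elemN_inj (hSA hx) (hSB hy) hidx ▸ hy)
    · have hlt := elemN_lt (hSA (hmemA _ h1))
      have : elemN Xj (SA.toList[(r : ℕ)]'h1) = Xj.card + (c' : ℕ) := by exact_mod_cast heq
      omega
    · have hlt := elemN_lt (hSB (hmemB _ h2))
      have : Xj.card + bj + (r : ℕ) = elemN Xj (SB.toList[(c' : ℕ)]'h2) := by exact_mod_cast heq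
      omega
    · have : Xj.card + bj + (r : ℕ) = Xj.card + (c' : ℕ) := by exact_mod_cast heq
      omega
  · -- B vs A
    exfalso
    have hr' : (r' : ℕ) < a' := hv r' rfl
    have hc : (c : ℕ) < bj := c.2
    simp only [Sum.elim_inl, Sum.elim_inr, qA, qB] at heq
    split_ifs at heq with h1 h2 h2
    · have hx := hmemB _ h1
      have hy := hmemA _ h2
      have hidx : elemN Xj (SB.toList[(c : ℕ)]'h1) = elemN Xj (SA.toList[(r' : ℕ)]'h2) := by
        exact_mod_cast heq
      exact hdisj _ hy (elemN_inj (hSB hx) (hSA hy) hidx ▸ hx)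
    · have hlt := elemN_lt (hSB (hmemB _ h1))
      have : elemN Xj (SB.toList[(c : ℕ)]'h1) = Xj.card + bj + (r' : ℕ) := by exact_mod_cast heq
      omega
    · have hlt := elemN_lt (hSA (hmemA _ h2))
      have : Xj.card + (c : ℕ) = elemN Xj (SA.toList[(r' : ℕ)]'h2) := by exact_mod_cast heq
      omega
    · have : Xj.card + (c : ℕ) = Xj.card + bj + (r' : ℕ) := by exact_mod_cast heq
      omega
  · -- B vs B
    simp only [Sum.elim_inr, qB] at heq
    split_ifs at heq with h1 h2 h2
    · have hx := hmemB _ h1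
      have hy := hmemB _ h2
      have hidx : elemN Xj (SB.toList[(c : ℕ)]'h1) = elemN Xj (SB.toList[(c' : ℕ)]'h2) := by
        exact_mod_cast heq
      have hxy := elemN_inj (hSB hx) (hSB hy) hidx
      have : (c : ℕ) = (c' : ℕ) := ((SB.nodup_toList).getElem_inj_iff).1 hxy
      exact congrArg Sum.inr (Fin.ext this)
    · exfalso
      have hlt := elemN_lt (hSB (hmemB _ h1))
      have : elemN Xj (SB.toList[(c : ℕ)]'h1) = Xj.card + (c' : ℕ) := by exact_mod_cast heq
      omega
    · exfalso
      have hlt := elemN_lt (hSB (hmemB _ h2))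
      have : Xj.card + (c : ℕ) = elemN Xj (SB.toList[(c' : ℕ)]'h2) := by exact_mod_cast heq
      omega
    · have : Xj.card + (c : ℕ) = Xj.card + (c' : ℕ) := by exact_mod_cast heq
      exact congrArg Sum.inr (Fin.ext (by omega))

end Assembly

end
end TwoFamAux

open TwoFamAux in
/-- The undirected two-families theorem: if `A_1,…,A_h` and `B_1,…,B_h` are
families of subsets of `X_1 ∪ … ∪ X_d` (with the `X_j` pairwise disjoint)
such that `A_i ∩ B_i = ∅`, `A_i ∩ B_j ≠ ∅` for `i < j`, `|B_i ∩ X_j| ≤ b_j`,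
and for each `i` some permutation `π` has `|A_i ∩ X_j| ≤ a_{π(j)}` for all
`j`, then `h ≤ Q(a_1,…,a_d,b_1,…,b_d)`. -/

theorem two_families {α : Type*} [DecidableEq α] (d h : ℕ)
    (X : Fin d → Finset α) (hX : ∀ i j, i ≠ j → Disjoint (X i) (X j))
    (a b : Fin d → ℕ) (A B : Fin h → Finset α)
    (hA : ∀ i, A i ⊆ Finset.univ.biUnion X)
    (hB : ∀ i, B i ⊆ Finset.univ.biUnion X)
    (h1 : ∀ i, A i ∩ B i = ∅)
    (h2 : ∀ i j, i < j → (A i ∩ B j).Nonempty)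
    (h3 : ∀ i j, (B i ∩ X j).card ≤ b j)
    (h4 : ∀ i, ∃ π : Equiv.Perm (Fin d), ∀ j, (A i ∩ X j).card ≤ a (π j)) :
    h ≤ QQ d a b := by
  classical
  choose π hπ using h4
  set sa := (Finset.univ : Finset (Fin d)).sup a with hsa
  have hsup : ∀ j, a j ≤ sa := fun j => Finset.le_sup (Finset.mem_univ j)
  let AR : Fin h → (j : Fin d) → Fin sa → Fin (sa + b j) → ℚ :=
    fun i j => ArowF sa (b j) (a (π i j)) (X j) (A i ∩ X j)
  let BR : Fin h → (j : Fin d) → Fin (b j) → Fin (sa + b j) → ℚ :=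
    fun k j => BrowF sa (b j) (X j) (B k ∩ X j)
  let P : Matrix (Fin h) (Fin h) ℚ :=
    Matrix.of fun i k => ∏ j, detR sa (b j) (Sum.elim (AR i j) (BR k j))
  have hT1 : ∀ i k, i < k → P i k = 0 := by
    intro i k hik
    obtain ⟨x, hx⟩ := h2 i k hik
    rw [Finset.mem_inter] at hx
    obtain ⟨j, -, hj⟩ := Finset.mem_biUnion.1 (hA i hx.1)
    refine Finset.prod_eq_zero (Finset.mem_univ j) ?_
    exact offdiag_zero sa (b j) (a (π i j)) (hsup _) (X j) _ _ x
      (Finset.mem_inter.2 ⟨hx.1, hj⟩) (Finset.mem_inter.2 ⟨hx.2, hj⟩)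
      (hπ i j) (h3 k j)
  have hT2 : ∀ i, P i i ≠ 0 := by
    intro i
    show (∏ j, detR sa (b j) (Sum.elim (AR i j) (BR i j))) ≠ 0
    refine Finset.prod_ne_zero_iff.2 (fun j _ => ?_)
    refine diag_ne_zero sa (b j) (a (π i j)) (hsup _) (X j) _ _
      Finset.inter_subset_right Finset.inter_subset_right
      (fun x hx1 hx2 => ?_) (hπ i j) (h3 i j)
    have hmem : x ∈ A i ∩ B i := Finset.mem_inter.2
      ⟨(Finset.mem_inter.1 hx1).1, (Finset.mem_inter.1 hx2).1⟩
    rw [h1 i] at hmem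
    exact absurd hmem (Finset.notMem_empty x)
  have hdet : P.det ≠ 0 := by
    have htri : P.BlockTriangular (OrderDual.toDual) := by
      intro i k hik
      exact hT1 i k (OrderDual.toDual_lt_toDual.mp hik)
    rw [Matrix.det_of_lowerTriangular P htri]
    exact Finset.prod_ne_zero_iff.2 (fun i _ => hT2 i)
  let Adm : Finset ((j : Fin d) → Cols (sa + b j) (b j)) :=
    Finset.univ.filter (fun f => ∃ τ : Equiv.Perm (Fin d),
      ∀ j, ∀ t ∈ (f j).1, (t : ℕ) < a (τ j) + b j)
  have hexp : ∀ i k, P i k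
      = ∑ f ∈ Adm, (∏ j, Xval sa (b j) (AR i j) (f j)) * (∏ j, Yval sa (b j) (BR k j) (f j)) := by
    intro i k
    have hzero : ∀ f ∈ (Finset.univ : Finset ((j : Fin d) → Cols (sa + b j) (b j))), f ∉ Adm →
        (∏ j, Xval sa (b j) (AR i j) (f j) * Yval sa (b j) (BR k j) (f j)) = 0 := by
      intro f _ hf
      simp only [Adm, Finset.mem_filter, Finset.mem_univ, true_and] at hf
      push_neg at hf
      obtain ⟨j, t, ht, hbig⟩ := hf (π i)
      refine Finset.prod_eq_zero (Finset.mem_univ j) ?_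
      rw [Xval_eq_zero sa (b j) (AR i j) (a (π i j))
        (Arow_vanish sa (b j) (a (π i j)) (X j) _) (f j) t ht (by omega), zero_mul]
    calc P i k = ∏ j, detR sa (b j) (Sum.elim (AR i j) (BR k j)) := rfl
      _ = ∏ j, ∑ σ : Cols (sa + b j) (b j),
            Xval sa (b j) (AR i j) σ * Yval sa (b j) (BR k j) σ :=
          Finset.prod_congr rfl (fun j _ => detR_expansion sa (b j) (AR i j) (BR k j))
      _ = ∑ f ∈ Fintype.piFinset (fun j : Fin d =>
              (Finset.univ : Finset (Cols (sa + b j) (b j)))),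
            ∏ j, Xval sa (b j) (AR i j) (f j) * Yval sa (b j) (BR k j) (f j) :=
          Finset.prod_univ_sum (fun j : Fin d => (Finset.univ : Finset (Cols (sa + b j) (b j))))
            (fun j σ => Xval sa (b j) (AR i j) σ * Yval sa (b j) (BR k j) σ)
      _ = ∑ f ∈ (Finset.univ : Finset ((j : Fin d) → Cols (sa + b j) (b j))),
            ∏ j, Xval sa (b j) (AR i j) (f j) * Yval sa (b j) (BR k j) (f j) := by
          rw [Fintype.piFinset_univ]
      _ = ∑ f ∈ Adm,
            ∏ j, Xval sa (b j) (AR i j) (f j) * Yval sa (b j) (BR k j) (f j) :=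
          (Finset.sum_subset (show Adm ⊆ Finset.univ from Finset.filter_subset _ _) hzero).symm
      _ = ∑ f ∈ Adm, (∏ j, Xval sa (b j) (AR i j) (f j))
            * (∏ j, Yval sa (b j) (BR k j) (f j)) :=
          Finset.sum_congr rfl (fun f _ => Finset.prod_mul_distrib)
  let XM : Matrix (Fin h) {f // f ∈ Adm} ℚ :=
    Matrix.of fun i f => ∏ j, Xval sa (b j) (AR i j) (f.1 j)
  let YM : Matrix {f // f ∈ Adm} (Fin h) ℚ :=
    Matrix.of fun f k => ∏ j, Yval sa (b j) (BR k j) (f.1 j)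
  have hPXY : P = XM * YM := by
    ext i k
    rw [Matrix.mul_apply, hexp i k]
    exact (Finset.sum_coe_sort Adm (fun f0 => (∏ j, Xval sa (b j) (AR i j) (f0 j))
      * (∏ j, Yval sa (b j) (BR k j) (f0 j)))).symm
  have hrank : (Fintype.card (Fin h)) = P.rank :=
    (Matrix.rank_of_isUnit P ((Matrix.isUnit_iff_isUnit_det P).2
      (isUnit_iff_ne_zero.2 hdet))).symm
  have hle : P.rank ≤ Fintype.card {f // f ∈ Adm} := by
    rw [hPXY]
    exact le_trans (Matrix.rank_mul_le_left XM YM) (Matrix.rank_le_card_width XM)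
  have hh : h ≤ Adm.card := by
    have h5 := hrank ▸ hle
    rwa [Fintype.card_fin, Fintype.card_coe] at h5
  refine le_trans hh ?_
  -- injection into the QQ family
  let ι : (j : Fin d) → Fin (sa + b j) → Fin d × ℕ := fun j t => (j, t.val + 1)
  have hfilter : ∀ (f : (j : Fin d) → Cols (sa + b j) (b j)) (j : Fin d),
      (Finset.univ.biUnion fun j' => (f j').1.image (ι j')).filter (fun u => u.1 = j)
        = (f j).1.image (ι j) := by
    intro f j
    ext p
    simp only [Finset.mem_filter, Finset.mem_biUnion, Finset.mem_image, Finset.mem_univ,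
      true_and]
    constructor
    · rintro ⟨⟨j', t, ht, rfl⟩, hp1⟩
      change j' = j at hp1
      subst hp1
      exact ⟨t, ht, rfl⟩
    · rintro ⟨t, ht, rfl⟩
      exact ⟨⟨j, t, ht, rfl⟩, rfl⟩
  have hinj : ∀ j : Fin d, Function.Injective (ι j) := by
    intro j t t' htt
    simp only [ι, Prod.mk.injEq, true_and] at htt
    exact Fin.ext (by omega)
  rw [QQ]
  refine Finset.card_le_card_of_injOn
    (fun f => Finset.univ.biUnion fun j => (f j).1.image (ι j)) ?_ ?_
  · intro f hf
    simp only [Adm, Finset.mem_coe, Finset.mem_filter, Finset.mem_univ, true_and] at hf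
    obtain ⟨τ, hτ⟩ := hf
    rw [Finset.mem_coe, Finset.mem_filter]
    constructor
    · rw [Finset.mem_powerset]
      intro p hp
      rw [Finset.mem_biUnion] at hp ⊢
      obtain ⟨j, -, hj⟩ := hp
      rw [Finset.mem_image] at hj
      obtain ⟨t, ht, rfl⟩ := hj
      exact ⟨j, Finset.mem_univ j, Finset.mem_image.2 ⟨(t : ℕ) + 1,
        Finset.mem_Icc.2 ⟨by omega, by have := t.2; omega⟩, rfl⟩⟩
    · refine ⟨τ, fun j => ⟨?_, ?_⟩⟩
      · rw [hfilter f j]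
        intro y hy
        rw [Finset.image_image, Finset.mem_image] at hy
        obtain ⟨t, ht, rfl⟩ := hy
        have hlt := hτ j t ht
        simp only [Function.comp_apply, ι]
        exact Finset.mem_Icc.2 ⟨by omega, by omega⟩
      · rw [hfilter f j, Finset.card_image_of_injective _ (hinj j)]
        exact (f j).2
  · intro f hf g hg heq
    funext j
    apply Subtype.ext
    have hfg := congrArg (fun S => S.filter (fun u : Fin d × ℕ => u.1 = j)) heq
    simp only [hfilter f j, hfilter g j] at hfg
    ext t
    constructor
    · intro ht
      have hmm : ι j t ∈ (g j).1.image (ι j) := by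
        rw [← hfg]
        exact Finset.mem_image_of_mem _ ht
      obtain ⟨t', ht', htt⟩ := Finset.mem_image.1 hmm
      exact (hinj j htt) ▸ ht'
    · intro ht
      have hmm : ι j t ∈ (f j).1.image (ι j) := by
        rw [hfg]
        exact Finset.mem_image_of_mem _ ht
      obtain ⟨t', ht', htt⟩ := Finset.mem_image.1 hmm
      exact (hinj j htt) ▸ ht'
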